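/- Let F : (0,∞) → ℝ satisfy conditions (F2) and (F3) with constant k ∈ (0,1), let τ > 0, and let (γ_n)_{n≥0} be a sequence of positive real numbers satisfying F(γ_n) ≤ F(γ_0) − nτ for all n ≥ 1. Then the series Σ_{n=0}^∞ γ_n converges. -/

import Mathlib

open Filter Set

/-- If `F` satisfies (F2) and (F3) with constant `k ∈ (0,1)`, `τ > 0`,
and `(γₙ)` is a sequence of positive reals with `F (γ n) ≤ F (γ 0) - n·τ` for all `n ≥ 1`,
then the series `Σ γ n` converges. -/
theorem summable_gamma_of_F_decay
    (F : ℝ → ℝ) (k : ℝ) (hk : k ∈ Set.Ioo (0:ℝ) 1)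
    -- (F2)
    (hF2 : ∀ α : ℕ → ℝ, (∀ n, 0 < α n) →
      (Tendsto α atTop (nhds 0) ↔ Tendsto (fun n => F (α n)) atTop atBot))
    -- (F3) with constant k
    (hF3 : Tendsto (fun α : ℝ => α ^ k * F α) (nhdsWithin 0 (Set.Ioi 0)) (nhds 0))
    (τ : ℝ) (hτ : 0 < τ)
    (γ : ℕ → ℝ) (hγ_pos : ∀ n, 0 < γ n)
    (hdecay : ∀ n : ℕ, 1 ≤ n → F (γ n) ≤ F (γ 0) - n * τ) :
    Summable γ := by
  obtain ⟨hk0, hk1⟩ := hk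
  -- F (γ n) → -∞
  have hbot : Tendsto (fun n => F (γ n)) atTop atBot := by
    refine tendsto_atBot_mono' atTop (f₁ := fun n : ℕ => F (γ 0) - n * τ) ?_ ?_
    · filter_upwards [eventually_ge_atTop 1] with n hn using hdecay n hn
    · apply tendsto_atBot_add_const_left
      apply tendsto_neg_atBot_iff.mpr
      exact Tendsto.atTop_mul_const hτ tendsto_natCast_atTop_atTop
  -- γ → 0
  have hto0 : Tendsto γ atTop (nhds 0) := (hF2 γ hγ_pos).mpr hbot
  have hmem : Tendsto γ atTop (nhdsWithin 0 (Set.Ioi 0)) :=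
    tendsto_nhdsWithin_iff.mpr ⟨hto0, Eventually.of_forall hγ_pos⟩
  -- γ^k * F(γ) → 0
  have hcomp : Tendsto (fun n => γ n ^ k * F (γ n)) atTop (nhds 0) := hF3.comp hmem
  -- γ^k → 0
  have hpow0 : Tendsto (fun n => γ n ^ k) atTop (nhds 0) := by
    have := ((Real.continuousAt_rpow_const 0 k (Or.inr hk0.le)).tendsto).comp hto0
    simpa [Real.zero_rpow hk0.ne', Function.comp_def] using this
  -- γ^k * F(γ 0) → 0
  have hconst : Tendsto (fun n => γ n ^ k * F (γ 0)) atTop (nhds 0) := by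
    simpa using hpow0.mul_const (F (γ 0))
  have hdiff : Tendsto (fun n => γ n ^ k * F (γ 0) - γ n ^ k * F (γ n)) atTop (nhds 0) := by
    simpa using hconst.sub hcomp
  -- n * τ * γ^k → 0 by squeeze
  have hsq : Tendsto (fun n : ℕ => (n : ℝ) * τ * γ n ^ k) atTop (nhds 0) := by
    apply squeeze_zero' (g := fun n => γ n ^ k * F (γ 0) - γ n ^ k * F (γ n))
    · filter_upwards with n
      have := (hγ_pos n).le
      positivity
    · filter_upwards [eventually_ge_atTop 1] with n hn
      have h := hdecay n hn
      have hp : (0:ℝ) < γ n ^ k := Real.rpow_pos_of_pos (hγ_pos n) k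
      nlinarith [mul_le_mul_of_nonneg_left h hp.le]
    · exact hdiff
  -- eventually γ n ≤ n ^ (-(1/k))
  have hev : ∀ᶠ n : ℕ in atTop, γ n ≤ (n : ℝ) ^ (-(1/k)) := by
    have h1 : ∀ᶠ n : ℕ in atTop, (n : ℝ) * τ * γ n ^ k ≤ τ :=
      hsq.eventually (eventually_le_nhds hτ)
    filter_upwards [h1, eventually_ge_atTop 1] with n hn hn1
    have hnpos : (0:ℝ) < n := by exact_mod_cast hn1
    have h2 : (n : ℝ) * γ n ^ k ≤ 1 := by
      have := hn
      nlinarith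
    have h3 : γ n ^ k ≤ ((n:ℝ))⁻¹ := by
      rw [← one_div, le_div_iff₀ hnpos]
      nlinarith
    -- raise to power 1/k
    have h4 : (γ n ^ k) ^ (1/k) ≤ (((n:ℝ))⁻¹) ^ (1/k) :=
      Real.rpow_le_rpow (Real.rpow_pos_of_pos (hγ_pos n) k).le h3 (by positivity)
    have h5 : (γ n ^ k) ^ (1/k) = γ n := by
      rw [← Real.rpow_mul (hγ_pos n).le, mul_one_div, div_self hk0.ne', Real.rpow_one]
    have h6 : (((n:ℝ))⁻¹) ^ (1/k) = (n:ℝ) ^ (-(1/k)) := by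
      rw [Real.inv_rpow hnpos.le, ← Real.rpow_neg hnpos.le]
    rw [h5, h6] at h4
    exact h4
  -- comparison
  have hsum : Summable (fun n : ℕ => (n : ℝ) ^ (-(1/k))) := by
    rw [Real.summable_nat_rpow]
    have : 1 < 1 / k := (one_lt_div hk0).mpr hk1
    linarith
  apply Summable.of_norm_bounded_eventually_nat hsum
  filter_upwards [hev] with n hn
  rw [Real.norm_eq_abs, abs_of_pos (hγ_pos n)]
  exact hn
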